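/- Define W(δ, ω; α, β) = −2δ² + (α²−β²−δ²)²/(4β²) + 5(1−δ²) sin²ω ((α²−β²−δ²)²/(4β²δ²) − 1) for δ ∈ (0,1), β > 0. If α, β > 0 satisfy α² + 3β² < 1 and α ≠ β, then the point (δ, ω) = (√(3β²+α²), 0) is a critical point of W, and the determinant of the Hessian of W there equals 20(α²+3β²−1)(α²−β²)/β², which is negative when α > β and α²+3β² < 1. -/

import Mathlib

/-- The Lidov–Ziglin normalized quadrupolar Hamiltonian. -/
noncomputable def Wquad (α β δ ω : ℝ) : ℝ :=
  -2 * δ ^ 2 + (α ^ 2 - β ^ 2 - δ ^ 2) ^ 2 / (4 * β ^ 2) +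
    5 * (1 - δ ^ 2) * Real.sin ω ^ 2 *
      ((α ^ 2 - β ^ 2 - δ ^ 2) ^ 2 / (4 * β ^ 2 * δ ^ 2) - 1)

lemma Wquad_hasDerivAt_omega (α β δ ω : ℝ) :
    HasDerivAt (fun ω' => Wquad α β δ ω')
      ((10 * (1 - δ ^ 2) * ((α ^ 2 - β ^ 2 - δ ^ 2) ^ 2 / (4 * β ^ 2 * δ ^ 2) - 1)) *
        (Real.sin ω * Real.cos ω)) ω := by
  have hfun : (fun ω' => Wquad α β δ ω') =
      fun ω' => (-2 * δ ^ 2 + (α ^ 2 - β ^ 2 - δ ^ 2) ^ 2 / (4 * β ^ 2)) +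
        (5 * (1 - δ ^ 2) * ((α ^ 2 - β ^ 2 - δ ^ 2) ^ 2 / (4 * β ^ 2 * δ ^ 2) - 1)) *
          Real.sin ω' ^ 2 := by
    funext ω'; unfold Wquad; ring
  rw [hfun]
  have h := (((Real.hasDerivAt_sin ω).pow 2).const_mul
    (5 * (1 - δ ^ 2) * ((α ^ 2 - β ^ 2 - δ ^ 2) ^ 2 / (4 * β ^ 2 * δ ^ 2) - 1))).const_add
      (-2 * δ ^ 2 + (α ^ 2 - β ^ 2 - δ ^ 2) ^ 2 / (4 * β ^ 2))
  refine h.congr_deriv ?_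
  push_cast
  ring

lemma Wquad_deriv_omega_zero (α β δ : ℝ) :
    deriv (fun ω' => Wquad α β δ ω') 0 = 0 := by
  rw [(Wquad_hasDerivAt_omega α β δ 0).deriv]
  simp

lemma Wquad_hasDerivAt_delta (α β δ : ℝ) :
    HasDerivAt (fun δ' => Wquad α β δ' 0)
      (-4 * δ + 2 * (α ^ 2 - β ^ 2 - δ ^ 2) * (-(2 * δ)) / (4 * β ^ 2)) δ := by
  have hfun : (fun δ' => Wquad α β δ' 0) =
      fun δ' => -2 * δ' ^ 2 + (α ^ 2 - β ^ 2 - δ' ^ 2) ^ 2 / (4 * β ^ 2) := by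
    funext δ'; unfold Wquad; simp
  rw [hfun]
  have hsq : HasDerivAt (fun δ' : ℝ => α ^ 2 - β ^ 2 - δ' ^ 2) (-(2 * δ)) δ := by
    have := (hasDerivAt_pow 2 δ).const_sub (α ^ 2 - β ^ 2)
    refine this.congr_deriv ?_
    push_cast; ring
  have h := (((hasDerivAt_pow 2 δ).const_mul (-2 : ℝ)).add
    ((hsq.pow 2).div_const (4 * β ^ 2)))
  refine h.congr_deriv ?_
  push_cast; ring

lemma Wquad_hasDerivAt_delta2 (α β δ : ℝ) :
    HasDerivAt (fun δ' => deriv (fun x => Wquad α β x 0) δ')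
      (-4 + (2 * (-(2 * δ)) * (-(2 * δ)) + 2 * (α ^ 2 - β ^ 2 - δ ^ 2) * (-2)) / (4 * β ^ 2))
      δ := by
  have hfun : (fun δ' => deriv (fun x => Wquad α β x 0) δ') =
      fun δ' => -4 * δ' + 2 * (α ^ 2 - β ^ 2 - δ' ^ 2) * (-(2 * δ')) / (4 * β ^ 2) := by
    funext δ'; exact (Wquad_hasDerivAt_delta α β δ').deriv
  rw [hfun]
  have hsq : HasDerivAt (fun δ' : ℝ => α ^ 2 - β ^ 2 - δ' ^ 2) (-(2 * δ)) δ := by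
    have := (hasDerivAt_pow 2 δ).const_sub (α ^ 2 - β ^ 2)
    refine this.congr_deriv ?_
    push_cast; ring
  have hlin : HasDerivAt (fun δ' : ℝ => -(2 * δ')) (-2 : ℝ) δ := by
    have := ((hasDerivAt_id δ).const_mul (2 : ℝ)).neg
    refine this.congr_deriv ?_; ring
  have h1 : HasDerivAt (fun δ' : ℝ => -4 * δ') (-4 : ℝ) δ := by
    have := (hasDerivAt_id δ).const_mul (-4 : ℝ)
    refine this.congr_deriv ?_; ring
  have h2 := (((hsq.const_mul (2 : ℝ)).mul hlin).div_const (4 * β ^ 2))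
  have h := h1.add h2
  exact h

theorem singularity_A_hyperbolic
    (α β : ℝ) (hα : 0 < α) (hβ : 0 < β) (h1 : α ^ 2 + 3 * β ^ 2 < 1) (hαβ : α ≠ β)
    (δA : ℝ) (hδA : δA = Real.sqrt (3 * β ^ 2 + α ^ 2)) :
    deriv (fun δ => Wquad α β δ 0) δA = 0 ∧
    deriv (fun ω => Wquad α β δA ω) 0 = 0 ∧
    (deriv (fun δ => deriv (fun δ' => Wquad α β δ' 0) δ) δA) *
        (deriv (fun ω => deriv (fun ω' => Wquad α β δA ω') ω) 0) -
      (deriv (fun δ => deriv (fun ω => Wquad α β δ ω) 0) δA) ^ 2 =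
      20 * (α ^ 2 + 3 * β ^ 2 - 1) * (α ^ 2 - β ^ 2) / β ^ 2 ∧
    (β < α → 20 * (α ^ 2 + 3 * β ^ 2 - 1) * (α ^ 2 - β ^ 2) / β ^ 2 < 0) := by
  have hs : (0 : ℝ) < 3 * β ^ 2 + α ^ 2 := by positivity
  have hδA2 : δA ^ 2 = 3 * β ^ 2 + α ^ 2 := by
    rw [hδA]; exact Real.sq_sqrt hs.le
  have hβ0 : (β : ℝ) ≠ 0 := hβ.ne'
  refine ⟨?_, Wquad_deriv_omega_zero α β δA, ?_, ?_⟩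
  · rw [(Wquad_hasDerivAt_delta α β δA).deriv, hδA2]
    field_simp
    ring
  · -- second omega derivative
    have hωfun : (fun ω => deriv (fun ω' => Wquad α β δA ω') ω) =
        fun ω => (10 * (1 - δA ^ 2) * ((α ^ 2 - β ^ 2 - δA ^ 2) ^ 2 / (4 * β ^ 2 * δA ^ 2) - 1)) *
          (Real.sin ω * Real.cos ω) := by
      funext ω; exact (Wquad_hasDerivAt_omega α β δA ω).deriv
    have hω2 : HasDerivAt
        (fun ω => (10 * (1 - δA ^ 2) *
            ((α ^ 2 - β ^ 2 - δA ^ 2) ^ 2 / (4 * β ^ 2 * δA ^ 2) - 1)) *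
          (Real.sin ω * Real.cos ω))
        ((10 * (1 - δA ^ 2) * ((α ^ 2 - β ^ 2 - δA ^ 2) ^ 2 / (4 * β ^ 2 * δA ^ 2) - 1)) *
          (Real.cos 0 * Real.cos 0 + Real.sin 0 * -Real.sin 0)) 0 :=
      ((Real.hasDerivAt_sin 0).mul (Real.hasDerivAt_cos 0)).const_mul _
    have hmix : (fun δ => deriv (fun ω => Wquad α β δ ω) 0) = fun _ => (0 : ℝ) := by
      funext δ; exact Wquad_deriv_omega_zero α β δ
    rw [hmix, deriv_const, (Wquad_hasDerivAt_delta2 α β δA).deriv, hωfun, hω2.deriv, hδA2]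
    simp only [Real.cos_zero, Real.sin_zero]
    field_simp
    linear_combination (-320*β^2*α^2 + 320*β^2*α^4 + 320*β^4 + 640*β^4*α^2 - 960*β^6) * hδA2
  · intro hβα
    have h2 : α ^ 2 - β ^ 2 > 0 := by nlinarith
    have h3 : 20 * (α ^ 2 + 3 * β ^ 2 - 1) * (α ^ 2 - β ^ 2) < 0 := by nlinarith
    exact div_neg_of_neg_of_pos h3 (by positivity)
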